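/- Let f ∈ (0,1) and κ, γ₁, γ₂, γ₃ > 0, and let u* ∈ [0,1]⁴ be a steady state of the ZIP regulatory system. Then the determinant of the Jacobian matrix J(u*) satisfies det J(u*) = (1/(u₃*·(1+κ·u₃*²)))·( γ₃·κ²·u₃*⁶ + (κ·f·γ₂ + 2γ₃ + κ)·κ·u₃*⁴ + (2κ + γ₃)·u₃*² + 1 + (2·f·γ₂·(1+γ₁)·u₃* − f·γ₂)·κ·u₃*² ). -/
import Mathlib


/-- The ZIP regulatory vector field on ℝ⁴ (components indexed by `Fin 4`). -/
noncomputable def zipField (κ γ₁ γ₂ γ₃ f : ℝ) (u : Fin 4 → ℝ) : Fin 4 → ℝ :=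
  ![κ * (u 2) ^ 2 * (1 - u 0) - u 0,
    u 0 * f - u 1,
    1 - γ₁ * u 2 * u 3 - u 2,
    γ₂ * u 1 - γ₃ * u 2 * u 3 - (1 + γ₂ * u 1) * u 3]

/-- The Jacobian matrix of the ZIP regulatory vector field at a point u. -/
noncomputable def zipJacobian (κ γ₁ γ₂ γ₃ f : ℝ) (u : Fin 4 → ℝ) :
    Matrix (Fin 4) (Fin 4) ℝ :=
  !![-(κ * (u 2) ^ 2) - 1, 0, 2 * κ * u 2 * (1 - u 0), 0;
     f, -1, 0, 0;
     0, 0, -(γ₁ * u 3) - 1, -(γ₁ * u 2);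
     0, γ₂ * (1 - u 3), -(γ₃ * u 3), -(γ₃ * u 2) - 1 - γ₂ * u 1]

/-- the determinant of the Jacobian at a steady state in [0,1]⁴
has the explicit form given in terms of u₃*. -/
theorem zip_jacobian_det_formula
    (κ γ₁ γ₂ γ₃ f : ℝ) (hκ : 0 < κ) (hγ₁ : 0 < γ₁) (hγ₂ : 0 < γ₂) (hγ₃ : 0 < γ₃)
    (hf : f ∈ Set.Ioo (0 : ℝ) 1)
    (u : Fin 4 → ℝ) (hu : ∀ i, u i ∈ Set.Icc (0 : ℝ) 1)
    (hsteady : zipField κ γ₁ γ₂ γ₃ f u = 0) :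
    (zipJacobian κ γ₁ γ₂ γ₃ f u).det =
      (1 / (u 2 * (1 + κ * (u 2) ^ 2))) *
        (γ₃ * κ ^ 2 * (u 2) ^ 6 + (κ * f * γ₂ + 2 * γ₃ + κ) * κ * (u 2) ^ 4 +
          (2 * κ + γ₃) * (u 2) ^ 2 + 1 +
          (2 * f * γ₂ * (1 + γ₁) * u 2 - f * γ₂) * κ * (u 2) ^ 2) := by
  have h0 := congrFun hsteady 0
  have h1 := congrFun hsteady 1
  have h2 := congrFun hsteady 2
  simp [zipField] at h0 h1 h2
  have hc : u 2 ≠ 0 := by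
    intro h; rw [h] at h2; simp at h2
  have hk : (1 + κ * (u 2) ^ 2) ≠ 0 := by positivity
  have hu1 : u 1 = u 0 * f := by linarith
  have hu0 : u 0 = κ * (u 2) ^ 2 / (1 + κ * (u 2) ^ 2) := by
    rw [eq_div_iff hk]
    linear_combination -h0
  have hu3 : u 3 = (1 - u 2) / (γ₁ * u 2) := by
    field_simp
    linear_combination -h2
  simp [zipJacobian, Matrix.det_succ_row_zero, Fin.sum_univ_succ, Fin.succAbove]
  rw [hu1, hu0, hu3]
  field_simp
  ring
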